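/- Let f > 0, r ≥ 0, c ≥ 0 be integers with c + f ≤ 2^r, and let x be an integer with f·2^k ≤ x < f·2^(k+1). Define x' = ⌊x/f⌋·2^r + c + (x mod f). Then x = ⌊x'/2^r⌋·f + (x' mod 2^r) − c. -/

import Mathlib

theorem rans_decode_correct (f c x r k : ℕ) (hf : 0 < f) (hcf : c + f ≤ 2 ^ r)
    (h1 : f * 2 ^ k ≤ x) (h2 : x < f * 2 ^ (k + 1)) :
    x = (x / f * 2 ^ r + c + x % f) / 2 ^ r * f +
          (x / f * 2 ^ r + c + x % f) % 2 ^ r - c := by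
  have hlt : c + x % f < 2 ^ r :=
    lt_of_lt_of_le (by have := Nat.mod_lt x hf; omega) hcf
  have hrw : x / f * 2 ^ r + c + x % f = c + x % f + x / f * 2 ^ r := by ring
  rw [hrw, Nat.add_mul_div_right _ _ (Nat.pow_pos (by norm_num : 0 < 2) : 0 < 2 ^ r),
    Nat.add_mul_mod_self_right, Nat.div_eq_of_lt hlt, Nat.mod_eq_of_lt hlt]
  simp only [Nat.zero_add]
  rw [show x / f * f + (c + x % f) - c = x / f * f + x % f by omega,
    mul_comm, Nat.div_add_mod]
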